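/- Let k > 0 with k ≠ 1, let γ > 0 and let α ∈ (0,2π) with α ≠ π. Then the Schur complement S = D·R(γα)·D⁻¹·R(2πγ) − R(γα) is the zero matrix if and only if γ is a positive integer and γα is an integer multiple of π. -/

import Mathlib

/-- The 2×2 rotation-type matrix `R(ω)` with rows `(cos ω, sin ω)` and `(−sin ω, cos ω)`. -/
noncomputable def rotMat (ω : ℝ) : Matrix (Fin 2) (Fin 2) ℝ :=
  !![Real.cos ω, Real.sin ω; -Real.sin ω, Real.cos ω]

/-- The diagonal matrix `D = diag(1, k)`. -/
def diagMat (k : ℝ) : Matrix (Fin 2) (Fin 2) ℝ := !![1, 0; 0, k]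

lemma mul_helper (a b e f kk : ℝ) (hkk : kk ≠ 0) :
    !![1,0;0,kk] * !![a,b;-b,a] * !![1,0;0,kk⁻¹] * !![e,f;-f,e] - !![a,b;-b,a]
    = !![a*e - b*kk⁻¹*f - a, a*f + b*kk⁻¹*e - b;
         -(kk*b)*e - a*f + b, -(kk*b)*f + a*e - a] := by
  ext i j
  fin_cases i <;> fin_cases j <;>
    simp [Matrix.mul_apply, Fin.sum_univ_two, hkk, mul_comm kk a, mul_inv_cancel_right₀ hkk] <;> field_simp <;> ring

/-- for `k > 0`, `k ≠ 1`, `γ > 0`, `α ∈ (0,2π) ∖ {π}`, the Schur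
complement `S = D·R(γα)·D⁻¹·R(2πγ) − R(γα)` vanishes identically iff `γ` is a
positive integer and `γα` is an integer multiple of `π`. -/
theorem schurComplement_eq_zero_iff (k γ α : ℝ) (hk : 0 < k) (hk1 : k ≠ 1)
    (hγ : 0 < γ) (hα0 : 0 < α) (hα2 : α < 2 * Real.pi) (hαπ : α ≠ Real.pi) :
    diagMat k * rotMat (γ * α) * (diagMat k)⁻¹ * rotMat (2 * Real.pi * γ)
        - rotMat (γ * α) = 0 ↔
      (∃ n : ℕ, 0 < n ∧ γ = (n : ℝ)) ∧ (∃ m : ℤ, γ * α = (m : ℝ) * Real.pi) := by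
  have hk0 : k ≠ 0 := ne_of_gt hk
  have hDinv : (diagMat k)⁻¹ = !![1, 0; 0, k⁻¹] := by
    apply Matrix.inv_eq_right_inv
    ext i j
    fin_cases i <;> fin_cases j <;>
      simp [diagMat, Matrix.mul_apply, Fin.sum_univ_two, hk0]
  set c := Real.cos (γ * α) with hc_def
  set s := Real.sin (γ * α) with hs_def
  set C := Real.cos (2 * Real.pi * γ) with hC_def
  set S := Real.sin (2 * Real.pi * γ) with hS_def
  have hM : diagMat k * rotMat (γ * α) * (diagMat k)⁻¹ * rotMat (2 * Real.pi * γ)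
        - rotMat (γ * α)
      = !![c*C - s*k⁻¹*S - c, c*S + s*k⁻¹*C - s;
           -(k*s)*C - c*S + s, -(k*s)*S + c*C - c] := by
    rw [hDinv, hc_def, hs_def, hC_def, hS_def]
    simp only [diagMat, rotMat]
    exact mul_helper _ _ _ _ _ hk0
  rw [hM]
  constructor
  · intro h
    rw [← Matrix.ext_iff] at h
    have e1 := h 0 0
    have e2 := h 0 1
    have e3 := h 1 0
    have e4 := h 1 1
    simp at e1 e2 e3 e4
    have hkk : k - k⁻¹ ≠ 0 := by
      intro h'
      have hk2 : k * k = 1 := by field_simp at h'; linarith [h']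
      have : (k - 1) * (k + 1) = 0 := by nlinarith
      rcases mul_eq_zero.mp this with h1 | h1
      · exact hk1 (by linarith)
      · nlinarith
    have hsS : s * S = 0 := by
      have h1 : s * S * (k - k⁻¹) = 0 := by linear_combination e1 - e4
      exact (mul_eq_zero.mp h1).resolve_right hkk
    have hsC : s * C = 0 := by
      have h1 : s * C * (k⁻¹ - k) = 0 := by linear_combination e2 + e3
      have hkk' : k⁻¹ - k ≠ 0 := fun h' => hkk (by linarith)
      exact (mul_eq_zero.mp h1).resolve_right hkk'
    have hpy : S ^ 2 + C ^ 2 = 1 := Real.sin_sq_add_cos_sq _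
    have hs2 : s ^ 2 = 0 := by nlinarith [sq_nonneg (s*S), sq_nonneg (s*C)]
    have hs0 : s = 0 := by
      have := sq_eq_zero_iff.mp hs2; exact this
    have hc2 : c ^ 2 = 1 := by
      have := Real.sin_sq_add_cos_sq (γ * α)
      rw [← hs_def, ← hc_def] at this
      nlinarith
    have hcne : c ≠ 0 := by intro h'; rw [h'] at hc2; norm_num at hc2
    have hC1 : C = 1 := by
      have : c * (C - 1) = 0 := by linear_combination e4 + k * S * hs0
      rcases mul_eq_zero.mp this with h' | h'
      · exact absurd h' hcne
      · linarith
    constructor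
    · obtain ⟨n, hn⟩ := (Real.cos_eq_one_iff _).mp hC1
      have hπ : (0:ℝ) < Real.pi := Real.pi_pos
      have hγn : γ = (n : ℝ) := by
        have : (n : ℝ) * (2 * Real.pi) = γ * (2 * Real.pi) := by rw [hn]; ring
        exact (mul_right_cancel₀ (by positivity) this).symm
      have hnpos : (0:ℤ) < n := by exact_mod_cast hγn ▸ hγ
      refine ⟨n.toNat, by omega, ?_⟩
      rw [hγn]
      exact_mod_cast (Int.toNat_of_nonneg hnpos.le).symm
    · obtain ⟨m, hm⟩ := Real.sin_eq_zero_iff.mp hs0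
      exact ⟨m, hm.symm⟩
  · rintro ⟨⟨n, hn, hγn⟩, ⟨m, hm⟩⟩
    have hs0 : s = 0 := by
      rw [hs_def, hm]; exact Real.sin_int_mul_pi m
    have h2π : 2 * Real.pi * γ = (n : ℤ) * (2 * Real.pi) := by
      push_cast; rw [hγn]; ring
    have hS0 : S = 0 := by
      have h2π' : 2 * Real.pi * γ = ((2 * n : ℤ) : ℝ) * Real.pi := by
        push_cast; rw [hγn]; ring
      rw [hS_def, h2π']
      exact Real.sin_int_mul_pi _
    have hC1 : C = 1 := by
      rw [hC_def, h2π]; exact Real.cos_int_mul_two_pi n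
    ext i j
    fin_cases i <;> fin_cases j <;> simp [hs0, hS0, hC1]
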